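/- Let G be a finite group and L < H subgroups with L, H ∈ CD(G) such that the interval ⟦L,H⟧ in CD(G) is a quasi-antichain having at least three pairwise distinct atoms. Write H* = C_G(L) and L* = C_G(H). Then the commutator subgroup [H, H*] is contained in L ∩ L*, and L ∩ L* = C_G(⟨H ∪ H*⟩). -/

import Mathlib

/-- The Chermak-Delgado measure of a subgroup `H` of a finite group `G`:
`m_G(H) = |H| · |C_G(H)|`. -/
noncomputable def CDmeasure {G : Type*} [Group G] (H : Subgroup G) : ℕ :=
  Nat.card H * Nat.card (Subgroup.centralizer (H : Set G))

/-- `H` belongs to the Chermak-Delgado lattice of `G`: its measure is maximal. -/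
def inCD {G : Type*} [Group G] (H : Subgroup G) : Prop :=
  ∀ K : Subgroup G, CDmeasure K ≤ CDmeasure H

section CDAux

open Subgroup Pointwise
open scoped commutatorElement

variable {G : Type*} [Group G] [Finite G]

private lemma cd_meas_eq {X Y : Subgroup G} (hX : inCD X) (hY : inCD Y) :
    CDmeasure X = CDmeasure Y := le_antisymm (hY X) (hX Y)

private lemma cd_le_cc (X : Subgroup G) :
    X ≤ centralizer ((centralizer (X : Set G) : Subgroup G) : Set G) :=
  le_centralizer_iff.mpr le_rfl

/-- Double centralizer lemma for CD members. -/
private lemma cd_cc {X : Subgroup G} (hX : inCD X) :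
    inCD (centralizer (X : Set G)) ∧
      centralizer ((centralizer (X : Set G) : Subgroup G) : Set G) = X := by
  have hle : X ≤ centralizer ((centralizer (X : Set G) : Subgroup G) : Set G) := cd_le_cc X
  have hcard : Nat.card X
      ≤ Nat.card (centralizer ((centralizer (X : Set G) : Subgroup G) : Set G)) :=
    Subgroup.card_le_of_le hle
  have hmeas : CDmeasure X ≤ CDmeasure (centralizer (X : Set G)) := by
    unfold CDmeasure
    rw [Nat.mul_comm (Nat.card (centralizer (X : Set G)))]
    exact Nat.mul_le_mul_right _ hcard
  have hinCD : inCD (centralizer (X : Set G)) := fun K => (hX K).trans hmeas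
  refine ⟨hinCD, ?_⟩
  have heq : CDmeasure (centralizer (X : Set G)) = CDmeasure X := cd_meas_eq hinCD hX
  unfold CDmeasure at heq
  rw [Nat.mul_comm (Nat.card X)] at heq
  have h3 : Nat.card (centralizer ((centralizer (X : Set G) : Subgroup G) : Set G))
      = Nat.card X := Nat.eq_of_mul_eq_mul_left Nat.card_pos heq
  exact (Subgroup.eq_of_le_of_card_ge hle (le_of_eq h3)).symm

private lemma cd_centralizer_sup (X Y : Subgroup G) :
    centralizer ((X ⊔ Y : Subgroup G) : Set G)
      = centralizer (X : Set G) ⊓ centralizer (Y : Set G) := by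
  apply le_antisymm
  · exact le_inf (centralizer_le (SetLike.coe_subset_coe.mpr le_sup_left))
      (centralizer_le (SetLike.coe_subset_coe.mpr le_sup_right))
  · rw [le_centralizer_iff]
    exact sup_le (le_centralizer_iff.mpr inf_le_left) (le_centralizer_iff.mpr inf_le_right)

private lemma cd_card_mul_ge (X Y : Subgroup G) :
    Nat.card X * Nat.card Y
      ≤ Nat.card (↥((X : Set G) * (Y : Set G))) * Nat.card (X ⊓ Y : Subgroup G) := by
  classical
  have hmem : ∀ z : ↥((X : Set G) * (Y : Set G)),
      ∃ x y : G, x ∈ X ∧ y ∈ Y ∧ x * y = (z : G) := by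
    rintro ⟨z, hz⟩
    rcases Set.mem_mul.mp hz with ⟨x, hx, y, hy, hxy⟩
    exact ⟨x, y, hx, hy, hxy⟩
  choose u v hu hv huv using hmem
  have hmemP : ∀ p : ↥X × ↥Y, (p.1 : G) * (p.2 : G) ∈ (X : Set G) * (Y : Set G) := fun p =>
    Set.mul_mem_mul p.1.2 p.2.2
  have hsnd : ∀ p : ↥X × ↥Y,
      (u ⟨(p.1 : G) * (p.2 : G), hmemP p⟩)⁻¹ * (p.1 : G) ∈ (X ⊓ Y : Subgroup G) := by
    intro p
    have h : u ⟨(p.1 : G) * (p.2 : G), hmemP p⟩ * v ⟨(p.1 : G) * (p.2 : G), hmemP p⟩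
        = (p.1 : G) * (p.2 : G) := huv _
    have h3 : (u ⟨(p.1 : G) * (p.2 : G), hmemP p⟩)⁻¹ * (p.1 : G)
        = v ⟨(p.1 : G) * (p.2 : G), hmemP p⟩ * ((p.2 : G))⁻¹ := by
      have hc := congrArg
        (fun w => (u ⟨(p.1 : G) * (p.2 : G), hmemP p⟩)⁻¹ * w * ((p.2 : G))⁻¹) h
      simpa [mul_assoc] using hc.symm
    refine Subgroup.mem_inf.mpr ⟨mul_mem (inv_mem (hu _)) p.1.2, ?_⟩
    rw [h3]
    exact mul_mem (hv _) (inv_mem p.2.2)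
  let f : ↥X × ↥Y → ↥((X : Set G) * (Y : Set G)) × ↥(X ⊓ Y : Subgroup G) := fun p =>
    (⟨(p.1 : G) * (p.2 : G), hmemP p⟩,
     ⟨(u ⟨(p.1 : G) * (p.2 : G), hmemP p⟩)⁻¹ * (p.1 : G), hsnd p⟩)
  have hf : Function.Injective f := by
    intro p q hpq
    have h1' : (p.1 : G) * (p.2 : G) = (q.1 : G) * (q.2 : G) :=
      congrArg (fun w => ((w.1 : G))) hpq
    have hzz : (⟨(p.1 : G) * (p.2 : G), hmemP p⟩ : ↥((X : Set G) * (Y : Set G)))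
        = ⟨(q.1 : G) * (q.2 : G), hmemP q⟩ := Subtype.ext h1'
    have h2' : (u ⟨(p.1 : G) * (p.2 : G), hmemP p⟩)⁻¹ * (p.1 : G)
        = (u ⟨(q.1 : G) * (q.2 : G), hmemP q⟩)⁻¹ * (q.1 : G) :=
      congrArg (fun w => ((w.2 : G))) hpq
    rw [← hzz] at h2'
    have hp1 : (p.1 : G) = (q.1 : G) := mul_left_cancel h2'
    have hp2 : (p.2 : G) = (q.2 : G) := by
      rw [hp1] at h1'
      exact mul_left_cancel h1'
    exact Prod.ext (Subtype.ext hp1) (Subtype.ext hp2)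
  have hcard := Nat.card_le_card_of_injective f hf
  simpa [Nat.card_prod] using hcard

private lemma cd_card_set_mono {s t : Set G} (h : s ⊆ t) : Nat.card s ≤ Nat.card t :=
  Nat.card_le_card_of_injective (Set.inclusion h) (Set.inclusion_injective h)

private lemma cd_mul_subset_sup (X Y : Subgroup G) :
    (X : Set G) * (Y : Set G) ⊆ ((X ⊔ Y : Subgroup G) : Set G) :=
  Set.mul_subset_iff.mpr fun x hx y hy =>
    mul_mem ((le_sup_left : X ≤ X ⊔ Y) hx) ((le_sup_right : Y ≤ X ⊔ Y) hy)

private lemma cd_cent_mul_subset (X Y : Subgroup G) :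
    (centralizer (X : Set G) : Set G) * (centralizer (Y : Set G) : Set G)
      ⊆ ((centralizer ((X ⊓ Y : Subgroup G) : Set G) : Subgroup G) : Set G) := by
  refine Set.mul_subset_iff.mpr fun a ha b hb => ?_
  have ha' : a ∈ centralizer (X : Set G) := ha
  have hb' : b ∈ centralizer (Y : Set G) := hb
  refine mem_centralizer_iff.mpr fun h hh => ?_
  have hh' : h ∈ X ⊓ Y := hh
  have h1 : h * a = a * h := (mem_centralizer_iff.mp ha') h (Subgroup.mem_inf.mp hh').1
  have h2 : h * b = b * h := (mem_centralizer_iff.mp hb') h (Subgroup.mem_inf.mp hh').2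
  calc h * (a * b) = h * a * b := (mul_assoc _ _ _).symm
    _ = a * h * b := by rw [h1]
    _ = a * (h * b) := mul_assoc _ _ _
    _ = a * (b * h) := by rw [h2]
    _ = a * b * h := (mul_assoc _ _ _).symm

private lemma cd_sup_inf {X Y : Subgroup G} (hX : inCD X) (hY : inCD Y) :
    inCD (X ⊔ Y) ∧ inCD (X ⊓ Y) ∧
      ((X ⊔ Y : Subgroup G) : Set G) = (X : Set G) * (Y : Set G) := by
  classical
  have h1 := cd_card_mul_ge X Y
  have h2 := cd_card_mul_ge (centralizer (X : Set G)) (centralizer (Y : Set G))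
  have h3 : Nat.card ↥((X : Set G) * (Y : Set G)) ≤ Nat.card (X ⊔ Y : Subgroup G) := by
    have := cd_card_set_mono (cd_mul_subset_sup X Y)
    simpa using this
  have h4 : Nat.card ↥((centralizer (X : Set G) : Set G) * (centralizer (Y : Set G) : Set G))
      ≤ Nat.card (centralizer ((X ⊓ Y : Subgroup G) : Set G)) := by
    have := cd_card_set_mono (cd_cent_mul_subset X Y)
    simpa using this
  have hCsup : centralizer ((X ⊔ Y : Subgroup G) : Set G)
      = centralizer (X : Set G) ⊓ centralizer (Y : Set G) := cd_centralizer_sup X Y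
  set a := Nat.card ↥((X : Set G) * (Y : Set G)) with hadef
  set b := Nat.card
    ↥((centralizer (X : Set G) : Set G) * (centralizer (Y : Set G) : Set G)) with hbdef
  set A := Nat.card (X ⊔ Y : Subgroup G) with hAdef
  set B := Nat.card (centralizer ((X ⊓ Y : Subgroup G) : Set G)) with hBdef
  set i := Nat.card (X ⊓ Y : Subgroup G) with hidef
  set j := Nat.card
    (centralizer (X : Set G) ⊓ centralizer (Y : Set G) : Subgroup G) with hjdef
  have hmSup : CDmeasure (X ⊔ Y) = A * j := by
    unfold CDmeasure
    rw [hCsup, hAdef, hjdef]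
  have hmInf : CDmeasure (X ⊓ Y) = i * B := by
    unfold CDmeasure
    rw [hidef, hBdef]
  have hMeq : CDmeasure Y = CDmeasure X := cd_meas_eq hY hX
  have posM : 0 < CDmeasure X := Nat.mul_pos Nat.card_pos Nat.card_pos
  have posI : 0 < i := Nat.card_pos
  have posJ : 0 < j := Nat.card_pos
  have posA : 0 < A := Nat.card_pos
  have posb : 0 < b := by
    have : Nonempty
        ↥((centralizer (X : Set G) : Set G) * (centralizer (Y : Set G) : Set G)) :=
      ⟨⟨(1 : G) * (1 : G),
        Set.mul_mem_mul (centralizer (X : Set G)).one_mem (centralizer (Y : Set G)).one_mem⟩⟩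
    exact Nat.card_pos
  have c1 : CDmeasure X * CDmeasure X ≤ (a * i) * (b * j) := by
    have e : CDmeasure X * CDmeasure X
        = (Nat.card X * Nat.card Y)
          * (Nat.card (centralizer (X : Set G)) * Nat.card (centralizer (Y : Set G))) := by
      calc CDmeasure X * CDmeasure X = CDmeasure X * CDmeasure Y := by rw [hMeq]
        _ = (Nat.card X * Nat.card (centralizer (X : Set G)))
            * (Nat.card Y * Nat.card (centralizer (Y : Set G))) := rfl
        _ = _ := by ring
    rw [e]
    exact Nat.mul_le_mul h1 h2
  have c2 : (a * i) * (b * j) ≤ (A * i) * (B * j) :=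
    Nat.mul_le_mul (Nat.mul_le_mul_right _ h3) (Nat.mul_le_mul_right _ h4)
  have c3 : (A * i) * (B * j) = CDmeasure (X ⊔ Y) * CDmeasure (X ⊓ Y) := by
    rw [hmSup, hmInf]; ring
  have c4 : CDmeasure (X ⊔ Y) * CDmeasure (X ⊓ Y) ≤ CDmeasure X * CDmeasure X :=
    Nat.mul_le_mul (hX _) (hX _)
  have eqm : CDmeasure (X ⊔ Y) * CDmeasure (X ⊓ Y) = CDmeasure X * CDmeasure X :=
    le_antisymm c4 (c1.trans (c2.trans_eq c3))
  have eqc : (a * i) * (b * j) = (A * i) * (B * j) := by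
    have upper : (A * i) * (B * j) ≤ (a * i) * (b * j) := by
      calc (A * i) * (B * j) = CDmeasure (X ⊔ Y) * CDmeasure (X ⊓ Y) := c3
        _ ≤ CDmeasure X * CDmeasure X := c4
        _ ≤ (a * i) * (b * j) := c1
    exact le_antisymm c2 upper
  have hsupEq : CDmeasure (X ⊔ Y) = CDmeasure X := by
    have hle : CDmeasure (X ⊔ Y) ≤ CDmeasure X := hX _
    have h' : CDmeasure X * CDmeasure X ≤ CDmeasure (X ⊔ Y) * CDmeasure X := by
      calc CDmeasure X * CDmeasure X = CDmeasure (X ⊔ Y) * CDmeasure (X ⊓ Y) := eqm.symm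
        _ ≤ CDmeasure (X ⊔ Y) * CDmeasure X := Nat.mul_le_mul_left _ (hX _)
    exact le_antisymm hle (le_of_mul_le_mul_right h' posM)
  have hinfEq : CDmeasure (X ⊓ Y) = CDmeasure X := by
    have hle : CDmeasure (X ⊓ Y) ≤ CDmeasure X := hX _
    have h' : CDmeasure X * CDmeasure X ≤ CDmeasure X * CDmeasure (X ⊓ Y) := by
      calc CDmeasure X * CDmeasure X = CDmeasure (X ⊔ Y) * CDmeasure (X ⊓ Y) := eqm.symm
        _ ≤ CDmeasure X * CDmeasure (X ⊓ Y) := Nat.mul_le_mul_right _ (hX _)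
    exact le_antisymm hle (le_of_mul_le_mul_left h' posM)
  refine ⟨fun K => (hX K).trans hsupEq.ge, fun K => (hX K).trans hinfEq.ge, ?_⟩
  have eqab : (a * b) * (i * j) = (A * B) * (i * j) := by
    calc (a * b) * (i * j) = (a * i) * (b * j) := by ring
      _ = (A * i) * (B * j) := eqc
      _ = (A * B) * (i * j) := by ring
  have eqab' : a * b = A * B := Nat.eq_of_mul_eq_mul_right (Nat.mul_pos posI posJ) eqab
  have hBb : B = b := by
    have h5 : A * B ≤ A * b := by
      calc A * B = a * b := eqab'.symm
        _ ≤ A * b := Nat.mul_le_mul_right _ h3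
    exact le_antisymm (le_of_mul_le_mul_left h5 posA) h4
  have haA : a = A := by
    have h6 : a * b = A * b := by rw [eqab', hBb]
    exact Nat.eq_of_mul_eq_mul_right posb h6
  have hcards : ((X ⊔ Y : Subgroup G) : Set G).ncard ≤ ((X : Set G) * (Y : Set G)).ncard := by
    rw [← Nat.card_coe_set_eq, ← Nat.card_coe_set_eq, SetLike.coe_sort_coe,
      ← hAdef, ← hadef]
    exact haA.ge
  exact (Set.eq_of_subset_of_ncard_le (cd_mul_subset_sup X Y) hcards).symm

/-- Conjugate subgroup. -/
private def conjS (g : G) (X : Subgroup G) : Subgroup G :=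
  X.map (MulAut.conj g).toMonoidHom

private lemma mem_conjS {g z : G} {X : Subgroup G} :
    z ∈ conjS g X ↔ ∃ x ∈ X, g * x * g⁻¹ = z := by
  simp [conjS, Subgroup.mem_map, MulAut.conj_apply]

private lemma conjS_card (g : G) (X : Subgroup G) : Nat.card (conjS g X) = Nat.card X :=
  Nat.card_congr (X.equivMapOfInjective _ (MulAut.conj g).injective).toEquiv.symm

private lemma conjS_centralizer (g : G) (X : Subgroup G) :
    centralizer ((conjS g X : Subgroup G) : Set G) = conjS g (centralizer (X : Set G)) := by
  ext z
  constructor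
  · intro hz
    rw [mem_conjS]
    refine ⟨g⁻¹ * z * g, ?_, by group⟩
    refine mem_centralizer_iff.mpr fun x hx => ?_
    have hmem : g * x * g⁻¹ ∈ conjS g X := mem_conjS.mpr ⟨x, hx, rfl⟩
    have h1 : (g * x * g⁻¹) * z = z * (g * x * g⁻¹) :=
      (mem_centralizer_iff.mp hz) _ hmem
    calc x * (g⁻¹ * z * g) = g⁻¹ * ((g * x * g⁻¹) * z) * g := by group
      _ = g⁻¹ * (z * (g * x * g⁻¹)) * g := by rw [h1]
      _ = (g⁻¹ * z * g) * x := by group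
  · intro hz
    rcases mem_conjS.mp hz with ⟨w, hw, rfl⟩
    refine mem_centralizer_iff.mpr fun x hx => ?_
    have hx' : x ∈ conjS g X := hx
    rcases mem_conjS.mp hx' with ⟨x0, hx0, rfl⟩
    have hc : x0 * w = w * x0 := (mem_centralizer_iff.mp hw) x0 hx0
    calc (g * x0 * g⁻¹) * (g * w * g⁻¹) = g * (x0 * w) * g⁻¹ := by group
      _ = g * (w * x0) * g⁻¹ := by rw [hc]
      _ = (g * w * g⁻¹) * (g * x0 * g⁻¹) := by group

private lemma conjS_inCD {X : Subgroup G} (g : G) (hX : inCD X) : inCD (conjS g X) := by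
  have hm : CDmeasure (conjS g X) = CDmeasure X := by
    unfold CDmeasure
    rw [conjS_card, conjS_centralizer, conjS_card]
  exact fun K => (hX K).trans hm.ge

private lemma conjS_le {g : G} {X Y : Subgroup G} (hg : g ∈ Y) (h : X ≤ Y) :
    conjS g X ≤ Y := by
  intro z hz
  rcases mem_conjS.mp hz with ⟨x, hx, rfl⟩
  exact mul_mem (mul_mem hg (h hx)) (inv_mem hg)

/-- A covering pair in the Chermak-Delgado lattice is a normal inclusion. -/
private lemma cd_cover_normal {X Y : Subgroup G} (hX : inCD X) (hlt : X < Y)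
    (hcov : ∀ Z : Subgroup G, inCD Z → X ≤ Z → Z ≤ Y → Z = X ∨ Z = Y) :
    ∀ y ∈ Y, ∀ x ∈ X, y * x * y⁻¹ ∈ X := by
  intro y hy
  by_cases hyX : y ∈ X
  · exact fun x hx => mul_mem (mul_mem hyX hx) (inv_mem hyX)
  · have hconj : inCD (conjS y X) := conjS_inCD y hX
    have hCD := cd_sup_inf hconj hX
    have hle : conjS y X ⊔ X ≤ Y := sup_le (conjS_le hy hlt.le) hlt.le
    rcases hcov _ hCD.1 le_sup_right hle with hZ | hZ
    · intro x hx
      have hmem : y * x * y⁻¹ ∈ conjS y X := mem_conjS.mpr ⟨x, hx, rfl⟩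
      exact (le_sup_left.trans hZ.le) hmem
    · exfalso
      apply hyX
      have hyY : (y : G) ∈ ((conjS y X ⊔ X : Subgroup G) : Set G) := by
        rw [hZ]; exact hy
      rw [hCD.2.2] at hyY
      rcases Set.mem_mul.mp hyY with ⟨p, hp, q, hq, hpq⟩
      have hp' : p ∈ conjS y X := hp
      rcases mem_conjS.mp hp' with ⟨v, hv, rfl⟩
      have h0 : y * v * y⁻¹ * q = y := hpq
      have h1 : v * (y⁻¹ * q) = 1 := by
        have := congrArg (fun w => y⁻¹ * w) h0
        simpa [mul_assoc] using this
      have h2 : y⁻¹ = v⁻¹ * q⁻¹ := by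
        have := congrArg (fun w => v⁻¹ * w * q⁻¹) h1
        simpa [mul_assoc] using this
      have hy2 : y = q * v := by
        calc y = (y⁻¹)⁻¹ := (inv_inv y).symm
          _ = (v⁻¹ * q⁻¹)⁻¹ := by rw [h2]
          _ = q * v := by group
      rw [hy2]
      exact mul_mem hq hv

private lemma cd_mem_normalizer {N : Subgroup G} {g : G}
    (h1 : ∀ x ∈ N, g * x * g⁻¹ ∈ N) (h2 : ∀ x ∈ N, g⁻¹ * x * g⁻¹⁻¹ ∈ N) :
    g ∈ Subgroup.normalizer (N : Set G) := by
  rw [Subgroup.mem_normalizer_iff]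
  intro h
  constructor
  · exact fun hh => h1 h hh
  · intro hh
    have := h2 _ hh
    simpa [mul_assoc] using this

private lemma cd_conj_mem_centralizer {S : Subgroup G} {g x : G}
    (hx : x ∈ centralizer (S : Set G)) (hg : ∀ h ∈ S, g⁻¹ * h * g ∈ S) :
    g * x * g⁻¹ ∈ centralizer (S : Set G) := by
  refine mem_centralizer_iff.mpr fun h hh => ?_
  have hh0 : h ∈ S := hh
  have hh' : g⁻¹ * h * g ∈ S := hg h hh0
  have h1 : (g⁻¹ * h * g) * x = x * (g⁻¹ * h * g) := (mem_centralizer_iff.mp hx) _ hh'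
  calc h * (g * x * g⁻¹) = g * ((g⁻¹ * h * g) * x) * g⁻¹ := by group
    _ = g * (x * (g⁻¹ * h * g)) * g⁻¹ := by rw [h1]
    _ = (g * x * g⁻¹) * h := by group

private lemma cd_commutator_sup_le {X Y Z N : Subgroup G}
    (hxz : ⁅X, Z⁆ ≤ N) (hyz : ⁅Y, Z⁆ ≤ N) (hn : X ⊔ Y ≤ Subgroup.normalizer (N : Set G)) :
    ⁅X ⊔ Y, Z⁆ ≤ N := by
  rw [Subgroup.commutator_le]
  intro g hg z hz
  have hg' : g ∈ closure ((X : Set G) ∪ (Y : Set G)) := by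
    rwa [← Subgroup.sup_eq_closure]
  clear hg
  induction hg' using Subgroup.closure_induction with
  | mem x hx =>
      rcases hx with hx | hx
      · exact (Subgroup.commutator_le.mp hxz) x hx z hz
      · exact (Subgroup.commutator_le.mp hyz) x hx z hz
  | one => simpa using N.one_mem
  | mul x y hxc hyc px py =>
      have hxn : x ∈ Subgroup.normalizer (N : Set G) := hn (by rwa [Subgroup.sup_eq_closure])
      have hid : ⁅x * y, z⁆ = (x * ⁅y, z⁆ * x⁻¹) * ⁅x, z⁆ := by
        simp only [commutatorElement_def]
        group
      rw [hid]
      exact mul_mem ((Subgroup.mem_normalizer_iff.mp hxn _).mp py) px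
  | inv x hxc px =>
      have hxn : x⁻¹ ∈ Subgroup.normalizer (N : Set G) :=
        inv_mem (hn (by rwa [Subgroup.sup_eq_closure]))
      have hid : ⁅x⁻¹, z⁆ = x⁻¹ * ⁅x, z⁆⁻¹ * (x⁻¹)⁻¹ := by
        simp only [commutatorElement_def]
        group
      rw [hid]
      exact (Subgroup.mem_normalizer_iff.mp hxn _).mp (inv_mem px)

end CDAux

/-- if the interval `⟦L,H⟧` in `CD(G)` is a quasi-antichain with at
least three pairwise distinct atoms, and `H* = C_G(L)`, `L* = C_G(H)`, then
`[H, H*] ≤ L ∩ L*` and `L ∩ L* = C_G(⟨H ∪ H*⟩)`. -/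
theorem stmt3 {G : Type*} [Group G] [Finite G] (L H : Subgroup G) (hLH : L < H)
    (hL : inCD L) (hH : inCD H)
    (hqa : ∀ K K' : Subgroup G, inCD K → inCD K' → L < K → K ≤ K' → K' < H → K = K')
    (hthree : ∃ K1 K2 K3 : Subgroup G,
      (inCD K1 ∧ L < K1 ∧ K1 < H) ∧ (inCD K2 ∧ L < K2 ∧ K2 < H) ∧
      (inCD K3 ∧ L < K3 ∧ K3 < H) ∧ K1 ≠ K2 ∧ K1 ≠ K3 ∧ K2 ≠ K3)
    (Hstar Lstar : Subgroup G)
    (hHstar : Hstar = Subgroup.centralizer (L : Set G))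
    (hLstar : Lstar = Subgroup.centralizer (H : Set G)) :
    ⁅H, Hstar⁆ ≤ L ⊓ Lstar ∧
    L ⊓ Lstar = Subgroup.centralizer ((H ⊔ Hstar : Subgroup G) : Set G) := by
  obtain ⟨K1, K2, K3, ⟨hcd1, hL1, h1H⟩, ⟨hcd2, hL2, h2H⟩, ⟨hcd3, hL3, h3H⟩, h12, h13, h23⟩ :=
    hthree
  have hccL := cd_cc hL
  have hccH := cd_cc hH
  have hHsCD : inCD Hstar := by rw [hHstar]; exact hccL.1
  have hLsCD : inCD Lstar := by rw [hLstar]; exact hccH.1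
  -- goal 2 first
  have goal2 : L ⊓ Lstar = Subgroup.centralizer ((H ⊔ Hstar : Subgroup G) : Set G) := by
    rw [cd_centralizer_sup, ← hLstar, hHstar, hccL.2]
    exact inf_comm L Lstar
  refine ⟨?_, goal2⟩
  -- combinatorial structure of the interval
  have atom_sup : ∀ Ka Kb : Subgroup G, inCD Ka → inCD Kb → L < Ka → Ka < H →
      L < Kb → Kb < H → Ka ≠ Kb → Ka ⊔ Kb = H := by
    intro Ka Kb ha hb hLa haH hLb hbH hne
    have hs := (cd_sup_inf ha hb).1
    by_contra hneq
    have hlt : Ka ⊔ Kb < H := (sup_le haH.le hbH.le).lt_of_ne hneq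
    have h1 : Ka = Ka ⊔ Kb := hqa _ _ ha hs hLa le_sup_left hlt
    have h2 : Kb ≤ Ka := h1 ▸ le_sup_right
    exact hne (hqa _ _ hb ha hLb h2 haH).symm
  have atom_inf : ∀ Ka Kb : Subgroup G, inCD Ka → inCD Kb → L < Ka → Ka < H →
      L < Kb → Kb < H → Ka ≠ Kb → Ka ⊓ Kb = L := by
    intro Ka Kb ha hb hLa haH hLb hbH hne
    have hi := (cd_sup_inf ha hb).2.1
    by_contra hneq
    have hle : L ≤ Ka ⊓ Kb := le_inf hLa.le hLb.le
    have hlt : L < Ka ⊓ Kb := hle.lt_of_ne fun h => hneq h.symm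
    have h1 : Ka ⊓ Kb = Ka := hqa _ _ hi ha hlt inf_le_left haH
    have h2 : Ka ≤ Kb := h1 ▸ inf_le_right
    exact hne (hqa _ _ ha hb hLa h2 hbH)
  have cover : ∀ Ka : Subgroup G, inCD Ka → L < Ka → Ka < H →
      ∀ Z : Subgroup G, inCD Z → Ka ≤ Z → Z ≤ H → Z = Ka ∨ Z = H := by
    intro Ka ha hLa haH Z hZ hKZ hZH
    by_cases h : Z = H
    · exact Or.inr h
    · exact Or.inl (hqa Ka Z ha hZ hLa hKZ (hZH.lt_of_ne h)).symm
  -- normality of atoms in H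
  have normal1 : ∀ y ∈ H, ∀ x ∈ K1, y * x * y⁻¹ ∈ K1 :=
    cd_cover_normal hcd1 h1H (cover K1 hcd1 hL1 h1H)
  have normal2 : ∀ y ∈ H, ∀ x ∈ K2, y * x * y⁻¹ ∈ K2 :=
    cd_cover_normal hcd2 h2H (cover K2 hcd2 hL2 h2H)
  have normal3 : ∀ y ∈ H, ∀ x ∈ K3, y * x * y⁻¹ ∈ K3 :=
    cd_cover_normal hcd3 h3H (cover K3 hcd3 hL3 h3H)
  have e12 : K1 ⊓ K2 = L := atom_inf _ _ hcd1 hcd2 hL1 h1H hL2 h2H h12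
  have e13 : K1 ⊓ K3 = L := atom_inf _ _ hcd1 hcd3 hL1 h1H hL3 h3H h13
  have e23 : K2 ⊓ K3 = L := atom_inf _ _ hcd2 hcd3 hL2 h2H hL3 h3H h23
  have s12 : K1 ⊔ K2 = H := atom_sup _ _ hcd1 hcd2 hL1 h1H hL2 h2H h12
  have s13 : K1 ⊔ K3 = H := atom_sup _ _ hcd1 hcd3 hL1 h1H hL3 h3H h13
  have s23 : K2 ⊔ K3 = H := atom_sup _ _ hcd2 hcd3 hL2 h2H hL3 h3H h23
  have normL : ∀ y ∈ H, ∀ x ∈ L, y * x * y⁻¹ ∈ L := by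
    intro y hy x hx
    rw [← e12] at hx ⊢
    exact Subgroup.mem_inf.mpr ⟨normal1 y hy x (Subgroup.mem_inf.mp hx).1,
      normal2 y hy x (Subgroup.mem_inf.mp hx).2⟩
  -- dual atoms
  have hcc1 := cd_cc hcd1
  have hcc2 := cd_cc hcd2
  have hcc3 := cd_cc hcd3
  have ccH : Subgroup.centralizer (Lstar : Set G) = H := by
    rw [hLstar]; exact hccH.2
  have ccL : Subgroup.centralizer (Hstar : Set G) = L := by
    rw [hHstar]; exact hccL.2
  -- strict bounds for dual atoms
  have hLsK : ∀ Ka : Subgroup G, inCD Ka → Ka < H →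
      Lstar < Subgroup.centralizer (Ka : Set G) := by
    intro Ka ha haH
    refine lt_of_le_of_ne ?_ fun h => ?_
    · rw [hLstar]
      exact Subgroup.centralizer_le (SetLike.coe_subset_coe.mpr haH.le)
    · have : H = Ka := by rw [← ccH, h, (cd_cc ha).2]
      exact haH.ne' this
  have hKHs : ∀ Ka : Subgroup G, inCD Ka → L < Ka →
      Subgroup.centralizer (Ka : Set G) < Hstar := by
    intro Ka ha hLa
    refine lt_of_le_of_ne ?_ fun h => ?_
    · rw [hHstar]
      exact Subgroup.centralizer_le (SetLike.coe_subset_coe.mpr hLa.le)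
    · have : Ka = L := by rw [← (cd_cc ha).2, h, ccL]
      exact hLa.ne' this
  have hHs1 : Subgroup.centralizer (K1 : Set G) < Hstar := hKHs K1 hcd1 hL1
  have hHs2 : Subgroup.centralizer (K2 : Set G) < Hstar := hKHs K2 hcd2 hL2
  have hHs3 : Subgroup.centralizer (K3 : Set G) < Hstar := hKHs K3 hcd3 hL3
  -- dual sups and infs
  have dsup : ∀ Ka Kb : Subgroup G, inCD Ka → inCD Kb → Ka ⊓ Kb = L →
      Subgroup.centralizer (Ka : Set G) ⊔ Subgroup.centralizer (Kb : Set G) = Hstar := by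
    intro Ka Kb ha hb hinf
    have hsCD := (cd_sup_inf (cd_cc ha).1 (cd_cc hb).1).1
    have hc : Subgroup.centralizer
        ((Subgroup.centralizer (Ka : Set G) ⊔ Subgroup.centralizer (Kb : Set G) :
          Subgroup G) : Set G) = L := by
      rw [cd_centralizer_sup, (cd_cc ha).2, (cd_cc hb).2, hinf]
    have hcc := (cd_cc hsCD).2
    rw [hc] at hcc
    rw [← hcc, hHstar]
  have dinf : ∀ Ka Kb : Subgroup G, Ka ⊔ Kb = H →
      Subgroup.centralizer (Ka : Set G) ⊓ Subgroup.centralizer (Kb : Set G) = Lstar := by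
    intro Ka Kb hsup
    rw [← cd_centralizer_sup, hsup, hLstar]
  have ds12 : Subgroup.centralizer (K1 : Set G) ⊔ Subgroup.centralizer (K2 : Set G) = Hstar :=
    dsup _ _ hcd1 hcd2 e12
  have ds13 : Subgroup.centralizer (K1 : Set G) ⊔ Subgroup.centralizer (K3 : Set G) = Hstar :=
    dsup _ _ hcd1 hcd3 e13
  have ds23 : Subgroup.centralizer (K2 : Set G) ⊔ Subgroup.centralizer (K3 : Set G) = Hstar :=
    dsup _ _ hcd2 hcd3 e23
  have di13 : Subgroup.centralizer (K1 : Set G) ⊓ Subgroup.centralizer (K3 : Set G) = Lstar :=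
    dinf _ _ s13
  have di23 : Subgroup.centralizer (K2 : Set G) ⊓ Subgroup.centralizer (K3 : Set G) = Lstar :=
    dinf _ _ s23
  have di12 : Subgroup.centralizer (K1 : Set G) ⊓ Subgroup.centralizer (K2 : Set G) = Lstar :=
    dinf _ _ s12
  -- dual covers and normality of dual atoms in Hstar
  have dual_cover : ∀ Ka : Subgroup G, inCD Ka → L < Ka → Ka < H →
      ∀ Z : Subgroup G, inCD Z → Subgroup.centralizer (Ka : Set G) ≤ Z → Z ≤ Hstar →
        Z = Subgroup.centralizer (Ka : Set G) ∨ Z = Hstar := by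
    intro Ka ha hLa haH Z hZ h1 h2
    have hZcc := cd_cc hZ
    have hWCD : inCD (Subgroup.centralizer (Z : Set G)) := hZcc.1
    have hWle : Subgroup.centralizer (Z : Set G) ≤ Ka := by
      have := Subgroup.centralizer_le (SetLike.coe_subset_coe.mpr h1)
      rwa [(cd_cc ha).2] at this
    have hLW : L ≤ Subgroup.centralizer (Z : Set G) := by
      have := Subgroup.centralizer_le (SetLike.coe_subset_coe.mpr h2)
      rwa [ccL] at this
    by_cases hWL : Subgroup.centralizer (Z : Set G) = L
    · right
      rw [← hZcc.2, hWL, ← hHstar]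
    · left
      have hLWlt : L < Subgroup.centralizer (Z : Set G) := hLW.lt_of_ne fun h => hWL h.symm
      have hWKa : Subgroup.centralizer (Z : Set G) = Ka :=
        hqa _ Ka hWCD ha hLWlt hWle haH
      rw [← hZcc.2, hWKa]
  have normal1s : ∀ y ∈ Hstar, ∀ x ∈ Subgroup.centralizer (K1 : Set G),
      y * x * y⁻¹ ∈ Subgroup.centralizer (K1 : Set G) :=
    cd_cover_normal hcc1.1 hHs1 (dual_cover K1 hcd1 hL1 h1H)
  have normal2s : ∀ y ∈ Hstar, ∀ x ∈ Subgroup.centralizer (K2 : Set G),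
      y * x * y⁻¹ ∈ Subgroup.centralizer (K2 : Set G) :=
    cd_cover_normal hcc2.1 hHs2 (dual_cover K2 hcd2 hL2 h2H)
  have normal3s : ∀ y ∈ Hstar, ∀ x ∈ Subgroup.centralizer (K3 : Set G),
      y * x * y⁻¹ ∈ Subgroup.centralizer (K3 : Set G) :=
    cd_cover_normal hcc3.1 hHs3 (dual_cover K3 hcd3 hL3 h3H)
  -- cross normalization
  have cross : ∀ Ka : Subgroup G, inCD Ka →
      (∀ y ∈ Hstar, ∀ x ∈ Subgroup.centralizer (Ka : Set G),
        y * x * y⁻¹ ∈ Subgroup.centralizer (Ka : Set G)) →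
      ∀ g ∈ Hstar, ∀ x ∈ Ka, g * x * g⁻¹ ∈ Ka := by
    intro Ka ha hnorm g hg x hx
    rw [← (cd_cc ha).2] at hx ⊢
    exact cd_conj_mem_centralizer hx fun h hh => by
      simpa using hnorm g⁻¹ (inv_mem hg) h hh
  have norm1_byHs : ∀ g ∈ Hstar, ∀ x ∈ K1, g * x * g⁻¹ ∈ K1 := cross K1 hcd1 normal1s
  have norm2_byHs : ∀ g ∈ Hstar, ∀ x ∈ K2, g * x * g⁻¹ ∈ K2 := cross K2 hcd2 normal2s
  have norm3_byHs : ∀ g ∈ Hstar, ∀ x ∈ K3, g * x * g⁻¹ ∈ K3 := cross K3 hcd3 normal3s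
  have norm1s_byH : ∀ g ∈ H, ∀ x ∈ Subgroup.centralizer (K1 : Set G),
      g * x * g⁻¹ ∈ Subgroup.centralizer (K1 : Set G) := fun g hg x hx =>
    cd_conj_mem_centralizer hx fun h hh => by
      simpa using normal1 g⁻¹ (inv_mem hg) h hh
  have norm2s_byH : ∀ g ∈ H, ∀ x ∈ Subgroup.centralizer (K2 : Set G),
      g * x * g⁻¹ ∈ Subgroup.centralizer (K2 : Set G) := fun g hg x hx =>
    cd_conj_mem_centralizer hx fun h hh => by
      simpa using normal2 g⁻¹ (inv_mem hg) h hh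
  have norm3s_byH : ∀ g ∈ H, ∀ x ∈ Subgroup.centralizer (K3 : Set G),
      g * x * g⁻¹ ∈ Subgroup.centralizer (K3 : Set G) := fun g hg x hx =>
    cd_conj_mem_centralizer hx fun h hh => by
      simpa using normal3 g⁻¹ (inv_mem hg) h hh
  have normLs_byH : ∀ g ∈ H, ∀ x ∈ Lstar, g * x * g⁻¹ ∈ Lstar := by
    intro g hg x hx
    rw [hLstar] at hx ⊢
    exact cd_conj_mem_centralizer hx fun h hh => mul_mem (mul_mem (inv_mem hg) hh) hg
  have normLs_byHs : ∀ g ∈ Hstar, ∀ x ∈ Lstar, g * x * g⁻¹ ∈ Lstar := by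
    intro g hg x hx
    rw [← di12] at hx ⊢
    exact Subgroup.mem_inf.mpr ⟨normal1s g hg x (Subgroup.mem_inf.mp hx).1,
      normal2s g hg x (Subgroup.mem_inf.mp hx).2⟩
  have normL_byHs : ∀ g ∈ Hstar, ∀ x ∈ L, g * x * g⁻¹ ∈ L := by
    intro g hg x hx
    have hg' : g ∈ Subgroup.centralizer (L : Set G) := by rw [← hHstar]; exact hg
    have hcomm : x * g = g * x := (Subgroup.mem_centralizer_iff.mp hg') x hx
    have he : g * x * g⁻¹ = x := by rw [← hcomm]; simp [mul_assoc]
    rw [he]; exact hx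
  -- normalizer memberships for N := L ⊓ Lstar
  have normN_byH : ∀ g ∈ H, ∀ x ∈ L ⊓ Lstar, g * x * g⁻¹ ∈ L ⊓ Lstar := fun g hg x hx =>
    Subgroup.mem_inf.mpr ⟨normL g hg x (Subgroup.mem_inf.mp hx).1,
      normLs_byH g hg x (Subgroup.mem_inf.mp hx).2⟩
  have normN_byHs : ∀ g ∈ Hstar, ∀ x ∈ L ⊓ Lstar, g * x * g⁻¹ ∈ L ⊓ Lstar := fun g hg x hx =>
    Subgroup.mem_inf.mpr ⟨normL_byHs g hg x (Subgroup.mem_inf.mp hx).1,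
      normLs_byHs g hg x (Subgroup.mem_inf.mp hx).2⟩
  have hHnorm : H ≤ Subgroup.normalizer ((L ⊓ Lstar : Subgroup G) : Set G) := fun g hg =>
    cd_mem_normalizer (normN_byH g hg) (normN_byH g⁻¹ (inv_mem hg))
  have hHsnorm : Hstar ≤ Subgroup.normalizer ((L ⊓ Lstar : Subgroup G) : Set G) := fun g hg =>
    cd_mem_normalizer (normN_byHs g hg) (normN_byHs g⁻¹ (inv_mem hg))
  -- pairwise commutator bounds
  have pairC : ∀ (Ka Kbs : Subgroup G),
      (∀ g ∈ Hstar, ∀ x ∈ Ka, g * x * g⁻¹ ∈ Ka) →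
      (∀ g ∈ H, ∀ x ∈ Kbs, g * x * g⁻¹ ∈ Kbs) →
      Kbs ≤ Hstar → Ka ≤ H → ⁅Ka, Kbs⁆ ≤ Ka ⊓ Kbs := by
    intro Ka Kbs hnA hnB hBle hAle
    rw [Subgroup.commutator_le]
    intro a ha b hb
    refine Subgroup.mem_inf.mpr ⟨?_, ?_⟩
    · have h1 : b * a⁻¹ * b⁻¹ ∈ Ka := hnA b (hBle hb) a⁻¹ (inv_mem ha)
      have := mul_mem ha h1
      simpa [commutatorElement_def, mul_assoc] using this
    · have h2 : a * b * a⁻¹ ∈ Kbs := hnB a (hAle ha) b hb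
      have := mul_mem h2 (inv_mem hb)
      simpa [commutatorElement_def, mul_assoc] using this
  have pair12 : ⁅K1, Subgroup.centralizer (K2 : Set G)⁆
      ≤ K1 ⊓ Subgroup.centralizer (K2 : Set G) :=
    pairC _ _ norm1_byHs norm2s_byH hHs2.le h1H.le
  have pair13 : ⁅K1, Subgroup.centralizer (K3 : Set G)⁆
      ≤ K1 ⊓ Subgroup.centralizer (K3 : Set G) :=
    pairC _ _ norm1_byHs norm3s_byH hHs3.le h1H.le
  have pair32 : ⁅K3, Subgroup.centralizer (K2 : Set G)⁆
      ≤ K3 ⊓ Subgroup.centralizer (K2 : Set G) :=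
    pairC _ _ norm3_byHs norm2s_byH hHs2.le h3H.le
  have pair21 : ⁅K2, Subgroup.centralizer (K1 : Set G)⁆
      ≤ K2 ⊓ Subgroup.centralizer (K1 : Set G) :=
    pairC _ _ norm2_byHs norm1s_byH hHs1.le h2H.le
  have pair23 : ⁅K2, Subgroup.centralizer (K3 : Set G)⁆
      ≤ K2 ⊓ Subgroup.centralizer (K3 : Set G) :=
    pairC _ _ norm2_byHs norm3s_byH hHs3.le h2H.le
  have pair31 : ⁅K3, Subgroup.centralizer (K1 : Set G)⁆
      ≤ K3 ⊓ Subgroup.centralizer (K1 : Set G) :=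
    pairC _ _ norm3_byHs norm1s_byH hHs1.le h3H.le
  have bot1 : ⁅K1, Subgroup.centralizer (K1 : Set G)⁆ = ⊥ :=
    Subgroup.commutator_eq_bot_iff_le_centralizer.mpr (cd_le_cc K1)
  have bot2 : ⁅K2, Subgroup.centralizer (K2 : Set G)⁆ = ⊥ :=
    Subgroup.commutator_eq_bot_iff_le_centralizer.mpr (cd_le_cc K2)
  -- subC1 : ⁅K1, Hstar⁆ ≤ K1 ⊓ K3s
  have normN13_byHs : ∀ g ∈ Hstar, ∀ x ∈ K1 ⊓ Subgroup.centralizer (K3 : Set G),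
      g * x * g⁻¹ ∈ K1 ⊓ Subgroup.centralizer (K3 : Set G) := fun g hg x hx =>
    Subgroup.mem_inf.mpr ⟨norm1_byHs g hg x (Subgroup.mem_inf.mp hx).1,
      normal3s g hg x (Subgroup.mem_inf.mp hx).2⟩
  have hnorm13 : Subgroup.centralizer (K1 : Set G) ⊔ Subgroup.centralizer (K3 : Set G)
      ≤ Subgroup.normalizer ((K1 ⊓ Subgroup.centralizer (K3 : Set G) : Subgroup G) : Set G) := by
    rw [ds13]
    exact fun g hg => cd_mem_normalizer (normN13_byHs g hg) (normN13_byHs g⁻¹ (inv_mem hg))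
  have subC1 : ⁅K1, Hstar⁆ ≤ K1 ⊓ Subgroup.centralizer (K3 : Set G) := by
    rw [← ds13, Subgroup.commutator_comm]
    refine cd_commutator_sup_le ?_ ?_ hnorm13
    · rw [Subgroup.commutator_comm, bot1]; exact bot_le
    · rw [Subgroup.commutator_comm]; exact pair13
  -- subC2 : ⁅K2, Hstar⁆ ≤ K2 ⊓ K3s
  have normN23_byHs : ∀ g ∈ Hstar, ∀ x ∈ K2 ⊓ Subgroup.centralizer (K3 : Set G),
      g * x * g⁻¹ ∈ K2 ⊓ Subgroup.centralizer (K3 : Set G) := fun g hg x hx =>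
    Subgroup.mem_inf.mpr ⟨norm2_byHs g hg x (Subgroup.mem_inf.mp hx).1,
      normal3s g hg x (Subgroup.mem_inf.mp hx).2⟩
  have hnorm23 : Subgroup.centralizer (K2 : Set G) ⊔ Subgroup.centralizer (K3 : Set G)
      ≤ Subgroup.normalizer ((K2 ⊓ Subgroup.centralizer (K3 : Set G) : Subgroup G) : Set G) := by
    rw [ds23]
    exact fun g hg => cd_mem_normalizer (normN23_byHs g hg) (normN23_byHs g⁻¹ (inv_mem hg))
  have subC2 : ⁅K2, Hstar⁆ ≤ K2 ⊓ Subgroup.centralizer (K3 : Set G) := by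
    rw [← ds23, Subgroup.commutator_comm]
    refine cd_commutator_sup_le ?_ ?_ hnorm23
    · rw [Subgroup.commutator_comm, bot2]; exact bot_le
    · rw [Subgroup.commutator_comm]; exact pair23
  -- subD1 : ⁅H, K2s⁆ ≤ K3 ⊓ K2s
  have normN32_byH : ∀ g ∈ H, ∀ x ∈ K3 ⊓ Subgroup.centralizer (K2 : Set G),
      g * x * g⁻¹ ∈ K3 ⊓ Subgroup.centralizer (K2 : Set G) := fun g hg x hx =>
    Subgroup.mem_inf.mpr ⟨normal3 g hg x (Subgroup.mem_inf.mp hx).1,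
      norm2s_byH g hg x (Subgroup.mem_inf.mp hx).2⟩
  have hnorm32 : K2 ⊔ K3 ≤ Subgroup.normalizer ((K3 ⊓ Subgroup.centralizer (K2 : Set G) : Subgroup G) : Set G) := by
    rw [s23]
    exact fun g hg => cd_mem_normalizer (normN32_byH g hg) (normN32_byH g⁻¹ (inv_mem hg))
  have subD1 : ⁅H, Subgroup.centralizer (K2 : Set G)⁆
      ≤ K3 ⊓ Subgroup.centralizer (K2 : Set G) := by
    rw [← s23]
    refine cd_commutator_sup_le ?_ ?_ hnorm32
    · rw [bot2]; exact bot_le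
    · exact pair32
  -- subD2 : ⁅H, K1s⁆ ≤ K3 ⊓ K1s
  have normN31_byH : ∀ g ∈ H, ∀ x ∈ K3 ⊓ Subgroup.centralizer (K1 : Set G),
      g * x * g⁻¹ ∈ K3 ⊓ Subgroup.centralizer (K1 : Set G) := fun g hg x hx =>
    Subgroup.mem_inf.mpr ⟨normal3 g hg x (Subgroup.mem_inf.mp hx).1,
      norm1s_byH g hg x (Subgroup.mem_inf.mp hx).2⟩
  have hnorm31 : K1 ⊔ K3 ≤ Subgroup.normalizer ((K3 ⊓ Subgroup.centralizer (K1 : Set G) : Subgroup G) : Set G) := by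
    rw [s13]
    exact fun g hg => cd_mem_normalizer (normN31_byH g hg) (normN31_byH g⁻¹ (inv_mem hg))
  have subD2 : ⁅H, Subgroup.centralizer (K1 : Set G)⁆
      ≤ K3 ⊓ Subgroup.centralizer (K1 : Set G) := by
    rw [← s13]
    refine cd_commutator_sup_le ?_ ?_ hnorm31
    · rw [bot1]; exact bot_le
    · exact pair31
  -- combine : c12 and c21
  have c12 : ⁅K1, Subgroup.centralizer (K2 : Set G)⁆ ≤ L ⊓ Lstar := by
    have t2 : ⁅K1, Subgroup.centralizer (K2 : Set G)⁆
        ≤ K1 ⊓ Subgroup.centralizer (K3 : Set G) :=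
      le_trans (Subgroup.commutator_mono le_rfl hHs2.le) subC1
    have t3 : ⁅K1, Subgroup.centralizer (K2 : Set G)⁆
        ≤ K3 ⊓ Subgroup.centralizer (K2 : Set G) :=
      le_trans (Subgroup.commutator_mono h1H.le le_rfl) subD1
    have hL' : ⁅K1, Subgroup.centralizer (K2 : Set G)⁆ ≤ L := by
      have h := le_inf (pair12.trans inf_le_left) (t3.trans inf_le_left)
      rwa [e13] at h
    have hLs' : ⁅K1, Subgroup.centralizer (K2 : Set G)⁆ ≤ Lstar := by
      have h := le_inf (pair12.trans inf_le_right) (t2.trans inf_le_right)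
      rwa [di23] at h
    exact le_inf hL' hLs'
  have c21 : ⁅K2, Subgroup.centralizer (K1 : Set G)⁆ ≤ L ⊓ Lstar := by
    have t2 : ⁅K2, Subgroup.centralizer (K1 : Set G)⁆
        ≤ K2 ⊓ Subgroup.centralizer (K3 : Set G) :=
      le_trans (Subgroup.commutator_mono le_rfl hHs1.le) subC2
    have t3 : ⁅K2, Subgroup.centralizer (K1 : Set G)⁆
        ≤ K3 ⊓ Subgroup.centralizer (K1 : Set G) :=
      le_trans (Subgroup.commutator_mono h2H.le le_rfl) subD2
    have hL' : ⁅K2, Subgroup.centralizer (K1 : Set G)⁆ ≤ L := by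
      have h := le_inf (pair21.trans inf_le_left) (t3.trans inf_le_left)
      rwa [e23] at h
    have hLs' : ⁅K2, Subgroup.centralizer (K1 : Set G)⁆ ≤ Lstar := by
      have h := le_inf (pair21.trans inf_le_right) (t2.trans inf_le_right)
      rwa [di13] at h
    exact le_inf hL' hLs'
  -- final assembly
  have final1 : ⁅K1, Hstar⁆ ≤ L ⊓ Lstar := by
    rw [← ds12, Subgroup.commutator_comm]
    refine cd_commutator_sup_le ?_ ?_ (by rw [ds12]; exact hHsnorm)
    · rw [Subgroup.commutator_comm, bot1]; exact bot_le
    · rw [Subgroup.commutator_comm]; exact c12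
  have final2 : ⁅K2, Hstar⁆ ≤ L ⊓ Lstar := by
    rw [← ds12, Subgroup.commutator_comm]
    refine cd_commutator_sup_le ?_ ?_ (by rw [ds12]; exact hHsnorm)
    · rw [Subgroup.commutator_comm]; exact c21
    · rw [Subgroup.commutator_comm, bot2]; exact bot_le
  rw [← s12]
  exact cd_commutator_sup_le final1 final2 (by rw [s12]; exact hHnorm)
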